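/- arXiv:1109.3574 — 2 statements merged into one kernel-verified Lean document; each statement's English description precedes it below -/
import Mathlib

section
/- Let n be a 2-step nilpotent real Lie algebra and ω a Lie algebra 2-cocycle on n with trivial real coefficients. Then the function on the BCH group N = (n, *) given by f(X, Y) = ½ω(X,Y) + (1/12)ω(X - Y, [X,Y]) is a group 2-cocycle: f(Y,Z) - f(X*Y, Z) + f(X, Y*Z) - f(X,Y) = 0 for all X, Y, Z. -/
/-- The Baker–Campbell–Hausdorff product on a 2-step nilpotent Lie algebra:
`X * Y = X + Y + ½[X,Y]`. -/
noncomputable def bchMul {L : Type*} [LieRing L] [LieAlgebra ℝ L] (X Y : L) : L :=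
  X + Y + (2⁻¹ : ℝ) • ⁅X, Y⁆

/-- If `n` is a 2-step nilpotent real Lie algebra and `ω` is a Lie algebra 2-cocycle
on `n` (an alternating bilinear form with `ω([X,Y],Z) - ω([X,Z],Y) + ω([Y,Z],X) = 0`),
then `f(X,Y) = ½ω(X,Y) + (1/12)ω(X - Y, [X,Y])` is a group 2-cocycle on the BCH group
`N = (n, *)`:  `f(Y,Z) - f(X*Y,Z) + f(X,Y*Z) - f(X,Y) = 0`. -/
theorem integrated_two_cocycle {L : Type*} [LieRing L] [LieAlgebra ℝ L]
    (h2 : ∀ X Y Z : L, ⁅⁅X, Y⁆, Z⁆ = 0)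
    (ω : L →ₗ[ℝ] L →ₗ[ℝ] ℝ)
    (halt : ∀ X : L, ω X X = 0)
    (hcoc : ∀ X Y Z : L, ω ⁅X, Y⁆ Z - ω ⁅X, Z⁆ Y + ω ⁅Y, Z⁆ X = 0) :
    ∀ X Y Z : L,
      (fun U V : L => (2⁻¹ : ℝ) * ω U V + (12⁻¹ : ℝ) * ω (U - V) ⁅U, V⁆) Y Z
      - (fun U V : L => (2⁻¹ : ℝ) * ω U V + (12⁻¹ : ℝ) * ω (U - V) ⁅U, V⁆) (bchMul X Y) Z
      + (fun U V : L => (2⁻¹ : ℝ) * ω U V + (12⁻¹ : ℝ) * ω (U - V) ⁅U, V⁆) X (bchMul Y Z)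
      - (fun U V : L => (2⁻¹ : ℝ) * ω U V + (12⁻¹ : ℝ) * ω (U - V) ⁅U, V⁆) X Y = 0 := by
  intro X Y Z
  -- the bracket with anything on either side of a bracket vanishes
  have h2' : ∀ A B C : L, ⁅A, ⁅B, C⁆⁆ = 0 := by
    intro A B C
    rw [← lie_skew, h2, neg_zero]
  -- skew-symmetry of ω
  have hskew : ∀ A B : L, ω A B = - ω B A := by
    intro A B
    have h := halt (A + B)
    simp only [map_add, LinearMap.add_apply, halt] at h
    linarith
  -- ω vanishes on a pair of brackets
  have hbz : ∀ A B C D : L, ω ⁅A, B⁆ ⁅C, D⁆ = 0 := by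
    intro A B C D
    have h := hcoc A B ⁅C, D⁆
    rw [h2' A C D, h2' B C D] at h
    simpa using h
  simp only [bchMul, map_add, map_sub, map_smul, LinearMap.add_apply, LinearMap.sub_apply,
    LinearMap.smul_apply, smul_eq_mul, lie_add, add_lie, lie_smul, smul_lie, h2, h2',
    map_zero, LinearMap.zero_apply, mul_zero, add_zero, zero_add, sub_zero]
  linarith [hcoc X Y Z, hbz X Y X Z, hbz X Y Y Z, hbz Y Z X Y, hbz Y Z X Z,
    hskew X ⁅Y, Z⁆, hskew Y ⁅X, Z⁆, hskew Z ⁅X, Y⁆,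
    hskew X ⁅X, Y⁆, hskew X ⁅X, Z⁆, hskew Y ⁅X, Y⁆,
    hskew Y ⁅Y, Z⁆, hskew Z ⁅X, Z⁆, hskew Z ⁅Y, Z⁆]
end

section
/- Extension of equivariant cocycles to semidirect products: let g and h be Lie algebras with g acting on h by derivations, and let ω be an n-cochain on h with values in a representation R of g ⋉ h. Define the extension ω̃ on g ⋉ h to agree with ω on h and vanish whenever any argument lies in g. Then ω̃ is closed if and only if ω is closed and g-equivariant. -/
open Finset

lemma succAbove_val' {n : ℕ} (p : Fin (n+1)) (q : Fin n) :
    ((p.succAbove q : Fin (n+1)) : ℕ) = if (q:ℕ) < (p:ℕ) then (q:ℕ) else (q:ℕ)+1 := by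
  rcases Nat.lt_or_ge (q:ℕ) (p:ℕ) with hq | hq
  · rw [Fin.succAbove_of_castSucc_lt p q (by rwa [Fin.lt_def])]
    simp [hq]
  · rw [Fin.succAbove_of_le_castSucc p q (by rwa [Fin.le_def])]
    simp [Nat.not_lt.mpr hq]

lemma succAbove_succAbove_comm {m : ℕ} (i : Fin (m+2)) (k : Fin (m+1))
    (h : (i:ℕ) ≤ (k:ℕ)) (hlt : (i:ℕ) < m+1) (t : Fin m) :
    (k.succ).succAbove ((⟨(i:ℕ), hlt⟩ : Fin (m+1)).succAbove t)
      = i.succAbove (k.succAbove t) := by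
  apply Fin.ext
  simp only [succAbove_val', Fin.val_succ]
  split_ifs <;> omega

lemma map_update_eq_cons {h R : Type*} [AddCommGroup h] [Module ℝ h]
    [AddCommGroup R] [Module ℝ R] {m : ℕ}
    (ω : AlternatingMap ℝ h R (Fin (m+1))) (b : Fin (m+1) → h) (k : Fin (m+1)) (c : h) :
    ω (Function.update b k c) = ((-1:ℤ)^(k:ℕ)) • ω (Fin.cons c (b ∘ k.succAbove)) := by
  have hfun : Fin.cons c (b ∘ k.succAbove) = (Function.update b k c) ∘ ⇑(Fin.cycleRange k).symm := by
    funext j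
    induction j using Fin.cases with
    | zero =>
        show c = Function.update b k c (k.cycleRange.symm 0)
        rw [Fin.cycleRange_symm_zero, Function.update_self]
    | succ t =>
        show b (k.succAbove t) = Function.update b k c (k.cycleRange.symm t.succ)
        rw [Fin.cycleRange_symm_succ, Function.update_of_ne (Fin.succAbove_ne k t)]
  rw [hfun, AlternatingMap.map_perm, Equiv.Perm.sign_symm, Fin.sign_cycleRange,
    Units.smul_def, smul_smul]
  norm_num [← pow_add]

lemma star2 {g h R : Type*} [AddCommGroup g] [Module ℝ g] [AddCommGroup h] [Module ℝ h]
    [AddCommGroup R] [Module ℝ R]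
    (ρ : g →ₗ[ℝ] h →ₗ[ℝ] h) {m : ℕ} (ω : AlternatingMap ℝ h R (Fin (m+1)))
    (x : Fin (m+2) → g) (a : Fin (m+2) → h) :
    ∑ i : Fin (m+2), ∑ j : Fin (m+2),
      (if hij : (i:ℕ) < (j:ℕ) then
        ((-1:ℤ)^((i:ℕ)+(j:ℕ))) •
          (ω (Fin.cons (ρ (x i) (a j)) ((a ∘ j.succAbove) ∘
              Fin.succAbove ⟨(i:ℕ), lt_of_lt_of_le hij (Nat.lt_succ_iff.mp j.isLt)⟩))
           - ω (Fin.cons (ρ (x j) (a i)) ((a ∘ j.succAbove) ∘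
              Fin.succAbove ⟨(i:ℕ), lt_of_lt_of_le hij (Nat.lt_succ_iff.mp j.isLt)⟩)))
       else 0)
    = - ∑ i : Fin (m+2), ((-1:ℤ)^(i:ℕ)) •
        ∑ k : Fin (m+1), ω (Function.update (a ∘ i.succAbove) k (ρ (x i) (a (i.succAbove k)))) := by
  -- abbreviation for the "both removed" cons configuration
  set C : Fin (m+2) → Fin (m+1) → R := fun i k =>
    ω (Fin.cons (ρ (x i) (a (i.succAbove k))) ((a ∘ i.succAbove) ∘ k.succAbove)) with hC
  -- rewrite RHS via move-to-front
  have hRHS : ∀ i : Fin (m+2),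
      ∑ k : Fin (m+1), ω (Function.update (a ∘ i.succAbove) k (ρ (x i) (a (i.succAbove k))))
        = ∑ k : Fin (m+1), ((-1:ℤ)^(k:ℕ)) • C i k := by
    intro i
    refine Finset.sum_congr rfl fun k _ => ?_
    exact map_update_eq_cons ω (a ∘ i.succAbove) k (ρ (x i) (a (i.succAbove k)))
  -- split LHS into two double sums
  have hsplit : ∀ (i j : Fin (m+2)),
      (if hij : (i:ℕ) < (j:ℕ) then
        ((-1:ℤ)^((i:ℕ)+(j:ℕ))) •
          (ω (Fin.cons (ρ (x i) (a j)) ((a ∘ j.succAbove) ∘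
              Fin.succAbove ⟨(i:ℕ), lt_of_lt_of_le hij (Nat.lt_succ_iff.mp j.isLt)⟩))
           - ω (Fin.cons (ρ (x j) (a i)) ((a ∘ j.succAbove) ∘
              Fin.succAbove ⟨(i:ℕ), lt_of_lt_of_le hij (Nat.lt_succ_iff.mp j.isLt)⟩)))
       else 0)
      = (if hij : (i:ℕ) < (j:ℕ) then
          ((-1:ℤ)^((i:ℕ)+(j:ℕ))) •
            ω (Fin.cons (ρ (x i) (a j)) ((a ∘ j.succAbove) ∘
                Fin.succAbove ⟨(i:ℕ), lt_of_lt_of_le hij (Nat.lt_succ_iff.mp j.isLt)⟩)) else 0)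
        - (if hij : (i:ℕ) < (j:ℕ) then
          ((-1:ℤ)^((i:ℕ)+(j:ℕ))) •
            ω (Fin.cons (ρ (x j) (a i)) ((a ∘ j.succAbove) ∘
                Fin.succAbove ⟨(i:ℕ), lt_of_lt_of_le hij (Nat.lt_succ_iff.mp j.isLt)⟩)) else 0) := by
    intro i j
    split <;> simp [smul_sub]
  simp only [hsplit, Finset.sum_sub_distrib]
  nth_rewrite 2 [Finset.sum_comm]
  have hA : ∀ i : Fin (m+2),
      (∑ j : Fin (m+2), if hij : (i:ℕ) < (j:ℕ) then
          ((-1:ℤ)^((i:ℕ)+(j:ℕ))) •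
            ω (Fin.cons (ρ (x i) (a j)) ((a ∘ j.succAbove) ∘
                Fin.succAbove ⟨(i:ℕ), lt_of_lt_of_le hij (Nat.lt_succ_iff.mp j.isLt)⟩)) else 0)
      = ∑ k : Fin (m+1), (if (i:ℕ) ≤ (k:ℕ) then -(((-1:ℤ)^((i:ℕ)+(k:ℕ))) • C i k) else 0) := by
    intro i
    rw [Fin.sum_univ_succ]
    rw [dif_neg (by simp)]
    rw [zero_add]
    refine Finset.sum_congr rfl fun k _ => ?_
    by_cases hik : (i:ℕ) ≤ (k:ℕ)
    · rw [dif_pos (by simp only [Fin.val_succ]; omega), if_pos hik]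
      have hsa : i.succAbove k = k.succ :=
        Fin.succAbove_of_le_castSucc _ _ (by rw [Fin.le_def]; simpa)
      have harg : ((a ∘ (k.succ).succAbove) ∘ Fin.succAbove
            (⟨(i:ℕ), lt_of_lt_of_le (by simp only [Fin.val_succ]; omega)
              (Nat.lt_succ_iff.mp (k.succ).isLt)⟩ : Fin (m+1)))
          = (a ∘ i.succAbove) ∘ k.succAbove := by
        funext t
        simp only [Function.comp_apply]
        rw [succAbove_succAbove_comm i k hik _ t]
      rw [harg, hC]
      simp only [hsa, Fin.val_succ]
      rw [show (i:ℕ) + ((k:ℕ)+1) = ((i:ℕ)+(k:ℕ))+1 by omega, pow_succ]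
      simp [mul_smul]
    · rw [dif_neg (by simp only [Fin.val_succ]; omega), if_neg hik]
  have hB : ∀ i : Fin (m+2),
      (∑ j : Fin (m+2), if hji : (j:ℕ) < (i:ℕ) then
          ((-1:ℤ)^((j:ℕ)+(i:ℕ))) •
            ω (Fin.cons (ρ (x i) (a j)) ((a ∘ i.succAbove) ∘
                Fin.succAbove ⟨(j:ℕ), lt_of_lt_of_le hji (Nat.lt_succ_iff.mp i.isLt)⟩)) else 0)
      = ∑ k : Fin (m+1), (if (k:ℕ) < (i:ℕ) then (((-1:ℤ)^((i:ℕ)+(k:ℕ))) • C i k) else 0) := by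
    intro i
    rw [Fin.sum_univ_castSucc]
    rw [dif_neg (by simp only [Fin.val_last]; omega)]
    rw [add_zero]
    refine Finset.sum_congr rfl fun k _ => ?_
    by_cases hk : (k:ℕ) < (i:ℕ)
    · rw [dif_pos (by simpa using hk), if_pos hk]
      have hsa : i.succAbove k = k.castSucc :=
        Fin.succAbove_of_castSucc_lt _ _ (by rw [Fin.lt_def]; simpa)
      have hfin : (⟨((k.castSucc : Fin (m+2)):ℕ), lt_of_lt_of_le (by simpa using hk)
            (Nat.lt_succ_iff.mp i.isLt)⟩ : Fin (m+1)) = k := by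
        apply Fin.ext; simp
      rw [hfin, hC]
      simp only [hsa, Fin.coe_castSucc]
      rw [Nat.add_comm (k:ℕ) (i:ℕ)]
    · rw [dif_neg (by simpa using hk), if_neg hk]
  simp only [hA, hB]
  rw [← Finset.sum_sub_distrib, ← Finset.sum_neg_distrib]
  refine Finset.sum_congr rfl fun i _ => ?_
  rw [hRHS i, Finset.smul_sum, ← Finset.sum_neg_distrib, ← Finset.sum_sub_distrib]
  refine Finset.sum_congr rfl fun k _ => ?_
  by_cases hik : (i:ℕ) ≤ (k:ℕ)
  · rw [if_pos hik, if_neg (by omega), sub_zero, pow_add, mul_smul]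
  · rw [if_neg hik, if_pos (by omega), zero_sub, pow_add, mul_smul]


/-- The Chevalley–Eilenberg differential of a `p`-cochain (given a bracket `br` on
`L` and an action `π` of `L` on `R`):
`(dω)(X₁,…,X_{p+1}) = Σᵢ (-1)^{i+1} Xᵢ·ω(…,X̂ᵢ,…)
   + Σ_{i<j} (-1)^{i+j} ω([Xᵢ,Xⱼ],…,X̂ᵢ,…,X̂ⱼ,…)`. -/
def ceD {L R : Type*} [AddCommGroup R] (br : L → L → L) (π : L → R → R) :
    ∀ {p : ℕ}, ((Fin p → L) → R) → (Fin (p + 1) → L) → R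
  | 0, ω => fun X => π (X 0) (ω Fin.elim0)
  | (m + 1), ω => fun X =>
      (∑ i : Fin (m + 2), ((-1 : ℤ) ^ (i : ℕ)) • π (X i) (ω (X ∘ i.succAbove)))
        + ∑ i : Fin (m + 2), ∑ j : Fin (m + 2),
            if hij : (i : ℕ) < (j : ℕ) then
              ((-1 : ℤ) ^ ((i : ℕ) + (j : ℕ))) •
                ω (Fin.cons (br (X i) (X j))
                    ((X ∘ j.succAbove) ∘
                      (Fin.succAbove
                        ⟨(i : ℕ), lt_of_lt_of_le hij (Nat.lt_succ_iff.mp j.isLt)⟩)))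
            else 0

lemma star {g h R : Type*} [LieRing g] [LieAlgebra ℝ g] [LieRing h] [LieAlgebra ℝ h]
    [AddCommGroup R] [Module ℝ R]
    (ρ : g →ₗ[ℝ] h →ₗ[ℝ] h) (π : (g × h) →ₗ[ℝ] R →ₗ[ℝ] R)
    {m : ℕ} (ω : AlternatingMap ℝ h R (Fin (m+1))) (X : Fin (m+2) → g × h) :
    ceD (fun X Y : g × h => (⁅X.1, Y.1⁆, ρ X.1 Y.2 - ρ Y.1 X.2 + ⁅X.2, Y.2⁆))
        (fun (Z : g × h) (r : R) => π Z r)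
        (⇑(ω.compLinearMap (LinearMap.snd ℝ g h))) X
    = ceD (fun a b : h => ⁅a, b⁆) (fun (a : h) (r : R) => π (0, a) r) (⇑ω)
        (fun i => (X i).2)
      + ∑ i : Fin (m+2), ((-1:ℤ)^(i:ℕ)) •
          (π ((X i).1, 0) (ω ((fun j => (X j).2) ∘ i.succAbove))
            - ∑ k : Fin (m+1), ω (Function.update ((fun j => (X j).2) ∘ i.succAbove) k
                (ρ (X i).1 (((fun j => (X j).2) ∘ i.succAbove) k)))) := by
  simp only [ceD, AlternatingMap.compLinearMap_apply, LinearMap.snd_apply]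
  have hπ : ∀ (i : Fin (m+2)) (r : R), π (X i) r = π ((X i).1, 0) r + π (0, (X i).2) r := by
    intro i r
    rw [← LinearMap.add_apply, ← map_add]
    congr 1
    ext <;> simp
  have hconsnd : ∀ (c : g × h) (w : Fin m → g × h),
      (fun t => ((Fin.cons c w : Fin (m+1) → g × h) t).2)
        = (Fin.cons c.2 (fun t => (w t).2) : Fin (m+1) → h) := by
    intro c w; funext t
    induction t using Fin.cases <;> simp
  have hcons3 : ∀ (u v w : h) (rest : Fin m → h),
      ω (Fin.cons (u - v + w) rest)
        = ω (Fin.cons u rest) - ω (Fin.cons v rest) + ω (Fin.cons w rest) := by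
    intro u v w rest
    have hupd : ∀ z : h, (Fin.cons z rest : Fin (m+1) → h)
        = Function.update (Fin.cons u rest : Fin (m+1) → h) 0 z :=
      fun z => by
        funext t
        induction t using Fin.cases with
        | zero => simp
        | succ t => simp [Function.update_of_ne (Fin.succ_ne_zero t)]
    rw [hupd (u - v + w), AlternatingMap.map_update_add, AlternatingMap.map_update_sub,
      ← hupd u, ← hupd v, ← hupd w]
  have key := star2 ρ ω (fun i => (X i).1) (fun i => (X i).2)
  have e1 : (∑ i : Fin (m+2), ((-1:ℤ)^(i:ℕ)) • π (X i) (ω fun t => ((X ∘ i.succAbove) t).2))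
      = (∑ i : Fin (m+2), ((-1:ℤ)^(i:ℕ)) •
            π ((X i).1, 0) (ω ((fun j => (X j).2) ∘ i.succAbove)))
        + ∑ i : Fin (m+2), ((-1:ℤ)^(i:ℕ)) •
            π (0, (X i).2) (ω ((fun j => (X j).2) ∘ i.succAbove)) := by
    rw [← Finset.sum_add_distrib]
    refine Finset.sum_congr rfl fun i _ => ?_
    rw [← smul_add]
    congr 1
    exact hπ i _
  have hd : ∀ (i j : Fin (m+2)),
      (if hij : (i:ℕ) < (j:ℕ) then
        ((-1:ℤ)^((i:ℕ)+(j:ℕ))) •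
          ω (fun t => ((Fin.cons
              (⁅(X i).1, (X j).1⁆, ρ (X i).1 (X j).2 - ρ (X j).1 (X i).2 + ⁅(X i).2, (X j).2⁆)
              ((X ∘ j.succAbove) ∘ Fin.succAbove
                ⟨(i:ℕ), lt_of_lt_of_le hij (Nat.lt_succ_iff.mp j.isLt)⟩)
              : Fin (m+1) → g × h) t).2)
       else 0)
      = (if hij : (i:ℕ) < (j:ℕ) then
          ((-1:ℤ)^((i:ℕ)+(j:ℕ))) •
            (ω (Fin.cons (ρ (X i).1 (X j).2) (((fun t => (X t).2) ∘ j.succAbove) ∘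
                Fin.succAbove ⟨(i:ℕ), lt_of_lt_of_le hij (Nat.lt_succ_iff.mp j.isLt)⟩))
             - ω (Fin.cons (ρ (X j).1 (X i).2) (((fun t => (X t).2) ∘ j.succAbove) ∘
                Fin.succAbove ⟨(i:ℕ), lt_of_lt_of_le hij (Nat.lt_succ_iff.mp j.isLt)⟩)))
         else 0)
        + (if hij : (i:ℕ) < (j:ℕ) then
          ((-1:ℤ)^((i:ℕ)+(j:ℕ))) •
            ω (Fin.cons ⁅(X i).2, (X j).2⁆ (((fun t => (X t).2) ∘ j.succAbove) ∘
                Fin.succAbove ⟨(i:ℕ), lt_of_lt_of_le hij (Nat.lt_succ_iff.mp j.isLt)⟩))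
         else 0) := by
    intro i j
    by_cases hij : (i:ℕ) < (j:ℕ)
    · rw [dif_pos hij, dif_pos hij, dif_pos hij, hconsnd]
      show ((-1:ℤ)^((i:ℕ)+(j:ℕ))) •
          ω (Fin.cons (ρ (X i).1 (X j).2 - ρ (X j).1 (X i).2 + ⁅(X i).2, (X j).2⁆) _) = _
      rw [hcons3, smul_add]
      rfl
    · rw [dif_neg hij, dif_neg hij, dif_neg hij]
      simp
  rw [e1]
  simp only [hd, Finset.sum_add_distrib]
  rw [key]
  simp only [smul_sub, Finset.sum_sub_distrib, Function.comp_apply]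
  abel


/-- Extension of equivariant cocycles to semidirect products.  Let `g` act on the
Lie algebra `h` by derivations (forming `g ⋉ h` with bracket
`[(x,a),(y,b)] = ([x,y], x·b - y·a + [a,b])`) and let `R` be a representation of
`g ⋉ h`.  Given an `R`-valued alternating `n`-cochain `ω` on `h`, its extension
`ω̃ = ω ∘ pr₂` to `g ⋉ h` agrees with `ω` on `h` and vanishes whenever any argument
lies in `g`.  Then `ω̃` is closed if and only if `ω` is closed and `g`-equivariant. -/
theorem extension_closed_iff_closed_and_equivariant
    {g h R : Type*} [LieRing g] [LieAlgebra ℝ g] [LieRing h] [LieAlgebra ℝ h]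
    [AddCommGroup R] [Module ℝ R]
    (ρ : g →ₗ[ℝ] h →ₗ[ℝ] h)
    (hρ_rep : ∀ (x y : g) (a : h), ρ ⁅x, y⁆ a = ρ x (ρ y a) - ρ y (ρ x a))
    (hρ_der : ∀ (x : g) (a b : h), ρ x ⁅a, b⁆ = ⁅ρ x a, b⁆ + ⁅a, ρ x b⁆)
    (π : (g × h) →ₗ[ℝ] R →ₗ[ℝ] R)
    (hπ_rep : ∀ (X Y : g × h) (r : R),
      π (⁅X.1, Y.1⁆, ρ X.1 Y.2 - ρ Y.1 X.2 + ⁅X.2, Y.2⁆) r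
        = π X (π Y r) - π Y (π X r))
    (n : ℕ) (ω : AlternatingMap ℝ h R (Fin n)) :
    (∀ X : Fin (n + 1) → g × h,
        ceD (fun X Y : g × h => (⁅X.1, Y.1⁆, ρ X.1 Y.2 - ρ Y.1 X.2 + ⁅X.2, Y.2⁆))
          (fun (Z : g × h) (r : R) => π Z r)
          (⇑(ω.compLinearMap (LinearMap.snd ℝ g h))) X = 0)
    ↔ ((∀ a : Fin (n + 1) → h,
          ceD (fun a b : h => ⁅a, b⁆) (fun (a : h) (r : R) => π (0, a) r) (⇑ω) a = 0)
        ∧ (∀ (x : g) (a : Fin n → h),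
            π (x, 0) (ω a) = ∑ i : Fin n, ω (Function.update a i (ρ x (a i))))) := by
  cases n with
  | zero =>
    have he : ∀ (v : Fin 0 → h), v = Fin.elim0 := fun v => funext fun i => i.elim0
    have hw : ∀ (v : Fin 0 → h), ω v = ω Fin.elim0 := fun v => congrArg ω (he v)
    constructor
    · intro H
      constructor
      · intro a
        have h0 := H (fun i => (0, a i))
        simp only [ceD, AlternatingMap.compLinearMap_apply, LinearMap.snd_apply] at h0 ⊢
        rwa [hw] at h0
      · intro x a
        have h0 := H (fun _ => (x, 0))
        simp only [ceD, AlternatingMap.compLinearMap_apply, LinearMap.snd_apply] at h0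
        rw [hw] at h0
        rw [hw a]
        simp [h0]
    · rintro ⟨h1, h2⟩ X
      simp only [ceD, AlternatingMap.compLinearMap_apply, LinearMap.snd_apply]
      rw [hw]
      have hx : π (X 0) (ω Fin.elim0)
          = π ((X 0).1, 0) (ω Fin.elim0) + π (0, (X 0).2) (ω Fin.elim0) := by
        rw [← LinearMap.add_apply, ← map_add]
        congr 2
        ext <;> simp
      have ha := h1 (fun _ => (X 0).2)
      simp only [ceD] at ha
      have hb := h2 (X 0).1 Fin.elim0
      simp only [Finset.univ_eq_empty, Finset.sum_empty] at hb
      rw [hx, ha, hb, add_zero]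
  | succ m =>
    constructor
    · intro H
      have hzero : ∀ (b : Fin (m+1) → h) (k : Fin (m+1)),
          ω (Function.update b k ((ρ (0:g)) (b k))) = 0 := by
        intro b k
        rw [map_zero ρ]
        simp only [LinearMap.zero_apply]
        exact ω.map_update_zero b k
      have hπ0 : ∀ r : R, π ((0:g), (0:h)) r = 0 := by
        intro r
        rw [show ((0:g), (0:h)) = (0 : g × h) from rfl, map_zero]
        rfl
      have hd0 : ∀ a : Fin (m+2) → h,
          ceD (fun a b : h => ⁅a, b⁆) (fun (a : h) (r : R) => π (0, a) r) (⇑ω) a = 0 := by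
        intro a
        have hs := star ρ π ω (fun i => ((0:g), a i))
        rw [H _] at hs
        rw [Finset.sum_eq_zero (fun i _ => by
          rw [hπ0, Finset.sum_eq_zero fun k _ => hzero _ k, sub_zero, smul_zero]),
          add_zero] at hs
        exact hs.symm
      refine ⟨hd0, ?_⟩
      intro x a
      have hs := star ρ π ω (Fin.cons ((x:g), (0:h)) (fun k => ((0:g), a k)))
      rw [H _] at hs
      have hX2 : (fun i => ((Fin.cons ((x:g), (0:h)) (fun k => ((0:g), a k))
          : Fin (m+2) → g × h) i).2) = (Fin.cons (0:h) a : Fin (m+2) → h) := by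
        funext t
        induction t using Fin.cases <;> simp
      rw [hX2, hd0 (Fin.cons 0 a), zero_add, Fin.sum_univ_succ] at hs
      rw [show ((Fin.cons (0:h) a : Fin (m+2) → h) ∘ (0 : Fin (m+2)).succAbove) = a from
        funext fun k => by simp [Fin.zero_succAbove]] at hs
      simp only [Fin.cons_zero, Fin.cons_succ, map_zero, LinearMap.zero_apply,
        AlternatingMap.map_update_zero, Finset.sum_const_zero, sub_zero, zero_sub,
        smul_zero, smul_neg, neg_zero, add_zero, Fin.val_zero, pow_zero, one_smul,
        hπ0] at hs
      have h3 := hs.symm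
      rw [sub_eq_zero] at h3
      exact h3
    · rintro ⟨h1, h2⟩ X
      rw [star ρ π ω X, h1 (fun i => (X i).2), zero_add]
      refine Finset.sum_eq_zero fun i _ => ?_
      rw [h2 (X i).1 ((fun j => (X j).2) ∘ i.succAbove), sub_self, smul_zero]
end
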